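/- Let M be a (k,n,d,p)-selector with t rows and let q be an integer with 1 ≤ q ≤ p−1. Let I be a set of q column indices of M and let f ∈ {0,1}^t be the bitwise OR of the columns of M indexed by I. Then the number of column indices j ∉ I such that the support of column j of M is contained in the support of f is at most k − q − 1. -/

import Mathlib

/-- Any two 1's in the binary vector `v` are separated by a run of at least `d` 0's:
if coordinates `i < j` both equal 1 then `j - i ≥ d + 1`. -/
def RunConstrained {t : ℕ} (d : ℕ) (v : Fin t → Bool) : Prop :=
  ∀ i j : Fin t, i < j → v i = true → v j = true → (i : ℕ) + d + 1 ≤ (j : ℕ)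

/-- `M` (a `t × n` binary matrix) is a `(k,n,d,p)`-selector: every column satisfies the
runlength constraint `d`, and for every set `S` of `k` columns, the submatrix they form
contains among its rows at least `p` distinct rows of the `k × k` identity matrix, i.e.
at least `p` columns `j ∈ S` admit a row where `j` has a 1 and all other columns of `S`
have a 0. -/
def IsSelector (k n d p t : ℕ) (M : Fin t → Fin n → Bool) : Prop :=
  (∀ j : Fin n, RunConstrained d (fun i => M i j)) ∧
  ∀ S : Finset (Fin n), S.card = k →
    p ≤ (S.filter (fun j =>
          ∃ i : Fin t, M i j = true ∧ ∀ j' ∈ S, j' ≠ j → M i j' = false)).card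

/-- Every column of `M` has Hamming weight exactly `w`. -/
def ColWeight (w : ℕ) {t n : ℕ} (M : Fin t → Fin n → Bool) : Prop :=
  ∀ j : Fin n, (Finset.univ.filter (fun i => M i j = true)).card = w


theorem stmt_14 (k n d p t q : ℕ) (hp : 1 ≤ p) (hpk : p ≤ k) (hkn : k ≤ n)
    (M : Fin t → Fin n → Bool) (hM : IsSelector k n d p t M)
    (I : Finset (Fin n)) (hq1 : 1 ≤ q) (hqp : q ≤ p - 1) (hI : I.card = q)
    (f : Fin t → Bool) (hf : ∀ i : Fin t, f i = true ↔ ∃ j ∈ I, M i j = true) :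
    (Finset.univ.filter (fun j : Fin n =>
        j ∉ I ∧ ∀ i : Fin t, M i j = true → f i = true)).card ≤ k - q - 1 := by
  classical
  by_contra h
  push_neg at h
  set B := Finset.univ.filter (fun j : Fin n =>
        j ∉ I ∧ ∀ i : Fin t, M i j = true → f i = true) with hB
  have hcard : k - q ≤ B.card := by omega
  obtain ⟨B', hB'sub, hB'card⟩ := Finset.exists_subset_card_eq hcard
  have hdisj : Disjoint I B' := by
    rw [Finset.disjoint_right]
    intro j hj hjI
    have := hB'sub hj
    rw [hB, Finset.mem_filter] at this
    exact this.2.1 hjI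
  have hScard : (I ∪ B').card = k := by
    rw [Finset.card_union_of_disjoint hdisj, hI, hB'card]; omega
  have hsel := hM.2 (I ∪ B') hScard
  have hsub : ((I ∪ B').filter (fun j =>
          ∃ i : Fin t, M i j = true ∧ ∀ j' ∈ (I ∪ B'), j' ≠ j → M i j' = false)) ⊆ I := by
    intro j hj
    rw [Finset.mem_filter] at hj
    obtain ⟨i, hMij, hrow⟩ := hj.2
    rcases Finset.mem_union.mp hj.1 with h' | h'
    · exact h'
    · exfalso
      have hjB := hB'sub h'
      rw [hB, Finset.mem_filter] at hjB
      have hfi := hjB.2.2 i hMij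
      obtain ⟨j', hj'I, hMij'⟩ := (hf i).mp hfi
      have hne : j' ≠ j := fun e => hjB.2.1 (e ▸ hj'I)
      have := hrow j' (Finset.mem_union_left _ hj'I) hne
      rw [this] at hMij'
      exact Bool.false_ne_true hMij'
  have hle := Finset.card_le_card hsub
  omega
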